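/- Let a, b be non-zero rational numbers and η, θ roots of unity such that α = aη + bθ has degree 1 or 2 over ℚ. Then ℚ(α) is one of the fields ℚ, ℚ(i), ℚ(√−2), ℚ(√−3), ℚ(√2), ℚ(√3), ℚ(√5). -/

import Mathlib

open Polynomial IntermediateField

/-- A complex number is a root of unity if some positive power of it equals 1. -/
def IsRootOfUnity (z : ℂ) : Prop := ∃ n : ℕ, 0 < n ∧ z ^ n = 1

namespace FQC

abbrev Concl (α : ℂ) : Prop :=
    IntermediateField.adjoin ℚ {α} = ⊥ ∨
    IntermediateField.adjoin ℚ {α} = IntermediateField.adjoin ℚ {Complex.I} ∨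
    IntermediateField.adjoin ℚ {α} =
      IntermediateField.adjoin ℚ {Complex.I * ((Real.sqrt 2 : ℝ) : ℂ)} ∨
    IntermediateField.adjoin ℚ {α} =
      IntermediateField.adjoin ℚ {Complex.I * ((Real.sqrt 3 : ℝ) : ℂ)} ∨
    IntermediateField.adjoin ℚ {α} = IntermediateField.adjoin ℚ {((Real.sqrt 2 : ℝ) : ℂ)} ∨
    IntermediateField.adjoin ℚ {α} = IntermediateField.adjoin ℚ {((Real.sqrt 3 : ℝ) : ℂ)} ∨
    IntermediateField.adjoin ℚ {α} = IntermediateField.adjoin ℚ {((Real.sqrt 5 : ℝ) : ℂ)}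


lemma no_rat_sq {m : ℕ} (hm : ¬ IsSquare m) (t : ℚ) : t ^ 2 ≠ (m : ℚ) := by
  intro h
  exact hm (by
    rw [← Rat.isSquare_natCast_iff]
    exact ⟨t, by rw [← h]; ring⟩)

lemma nsq {k : ℕ} (hk : Nat.sqrt k * Nat.sqrt k ≠ k) : ¬ IsSquare k := by
  rintro ⟨r, rfl⟩
  rw [Nat.sqrt_eq r] at hk
  exact hk rfl

lemma ru_ne_zero {z : ℂ} (h : IsRootOfUnity z) : z ≠ 0 := by
  obtain ⟨n, hn, h1⟩ := h
  intro h0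
  rw [h0, zero_pow hn.ne'] at h1
  exact zero_ne_one h1

lemma ru_mul_conj {z : ℂ} (h : IsRootOfUnity z) : z * (starRingEnd ℂ) z = 1 := by
  obtain ⟨n, hn, h1⟩ := h
  have habs : ‖z‖ = 1 := by
    have h2 : (‖z‖) ^ n = 1 := by
      rw [← norm_pow, h1, norm_one]
    rcases lt_trichotomy (‖z‖) 1 with h | h | h
    · nlinarith [pow_lt_one₀ (norm_nonneg z) h hn.ne']
    · exact h
    · nlinarith [one_lt_pow₀ h hn.ne']
  rw [Complex.mul_conj]
  norm_cast
  rw [Complex.normSq_eq_norm_sq, habs]; norm_num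

lemma ru_isIntegral {z : ℂ} (h : IsRootOfUnity z) : IsIntegral ℚ z := by
  obtain ⟨n, hn, h1⟩ := h
  refine ⟨X ^ n - C 1, monic_X_pow_sub_C 1 hn.ne', ?_⟩
  simp [h1]

lemma totient_le_four {N : ℕ} (h0 : 0 < N) (h : N.totient ≤ 4) :
    N = 1 ∨ N = 2 ∨ N = 3 ∨ N = 4 ∨ N = 5 ∨ N = 6 ∨ N = 8 ∨ N = 10 ∨ N = 12 := by
  have hφpos : 0 < N.totient := Nat.totient_pos.2 h0
  have hdvd : N ∣ 120 := by
    rw [← Nat.factorization_le_iff_dvd h0.ne' (by norm_num)]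
    rw [Finsupp.le_def]
    intro p
    by_cases hp : p.Prime
    · by_cases hpN : p ∣ N
      · have hple : p ≤ 5 := by
          have h1 : p.totient ∣ N.totient := Nat.totient_dvd_of_dvd hpN
          have h2 : p - 1 ≤ 4 := by
            rw [Nat.totient_prime hp] at h1
            exact le_trans (Nat.le_of_dvd hφpos h1) h
          omega
        have h2le : 2 ≤ p := hp.two_le
        have hnd : ∀ k : ℕ, 0 < k → ¬ (p^k ∣ N) → N.factorization p ≤ k - 1 := by
          intro k hkpos hk
          by_contra hcon
          push_neg at hcon
          exact hk ((Nat.Prime.pow_dvd_iff_le_factorization hp h0.ne').2 (by omega))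
        interval_cases p
        · -- p = 2
          have h16 : ¬ (16:ℕ) ∣ N := by
            intro h16
            have hd := Nat.totient_dvd_of_dvd h16
            rw [show Nat.totient 16 = 8 by decide] at hd
            have := Nat.le_of_dvd hφpos hd
            omega
          have h2 := hnd 4 (by norm_num) (by rwa [show (2:ℕ)^4 = 16 by norm_num])
          have hr : 3 ≤ (120:ℕ).factorization 2 :=
            (Nat.Prime.pow_dvd_iff_le_factorization Nat.prime_two (by norm_num)).1 (by norm_num)
          omega
        · -- p = 3
          have h9 : ¬ (9:ℕ) ∣ N := by
            intro h9
            have hd := Nat.totient_dvd_of_dvd h9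
            rw [show Nat.totient 9 = 6 by decide] at hd
            have := Nat.le_of_dvd hφpos hd
            omega
          have h2 := hnd 2 (by norm_num) (by rwa [show (3:ℕ)^2 = 9 by norm_num])
          have hr : 1 ≤ (120:ℕ).factorization 3 :=
            (Nat.Prime.pow_dvd_iff_le_factorization (by norm_num) (by norm_num)).1 (by norm_num)
          omega
        · exact absurd hp (by norm_num)
        · -- p = 5
          have h25 : ¬ (25:ℕ) ∣ N := by
            intro h25
            have hd := Nat.totient_dvd_of_dvd h25
            rw [show Nat.totient 25 = 20 by decide] at hd
            have := Nat.le_of_dvd hφpos hd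
            omega
          have h2 := hnd 2 (by norm_num) (by rwa [show (5:ℕ)^2 = 25 by norm_num])
          have hr : 1 ≤ (120:ℕ).factorization 5 :=
            (Nat.Prime.pow_dvd_iff_le_factorization (by norm_num) (by norm_num)).1 (by norm_num)
          omega
      · simp [Nat.factorization_eq_zero_of_not_dvd hpN]
    · simp [Nat.factorization_eq_zero_of_not_prime _ hp]
  have hmem : N ∈ (120:ℕ).divisors := Nat.mem_divisors.2 ⟨hdvd, by norm_num⟩
  fin_cases hmem <;> revert h <;> decide




-- assume dev1 lemmas exist; re-axiomatize quickly for isolated testing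
lemma ru_conj {z : ℂ} (h : IsRootOfUnity z) : IsRootOfUnity ((starRingEnd ℂ) z) := by
  obtain ⟨n, hn, h1⟩ := h
  exact ⟨n, hn, by rw [← map_pow, h1, map_one]⟩

lemma ru_mul {z w : ℂ} (hz : IsRootOfUnity z) (hw : IsRootOfUnity w) : IsRootOfUnity (z * w) := by
  obtain ⟨n, hn, h1⟩ := hz
  obtain ⟨m, hm, h2⟩ := hw
  refine ⟨n * m, Nat.mul_pos hn hm, ?_⟩
  rw [mul_pow, pow_mul, h1, one_pow, one_mul, pow_mul', h2, one_pow]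

lemma lin_eq {α : ℂ} (hint : IsIntegral ℚ α) (h1 : (minpoly ℚ α).natDegree = 1) :
    ∃ u : ℚ, α = (u : ℂ) := by
  refine ⟨-(minpoly ℚ α).coeff 0, ?_⟩
  have h0 := minpoly.aeval ℚ α
  rw [aeval_eq_sum_range' (n := 2) (by omega) α] at h0
  simp only [Finset.sum_range_succ, Finset.sum_range_zero, pow_zero, pow_one, zero_add] at h0
  rw [show (minpoly ℚ α).coeff 1 = 1 by
    have := (minpoly.monic hint).coeff_natDegree; rwa [h1] at this] at h0
  push_cast
  have : (((minpoly ℚ α).coeff 0 : ℂ)) + α = 0 := by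
    simpa [Algebra.smul_def] using h0
  linear_combination this

lemma quad_eq {α : ℂ} (hint : IsIntegral ℚ α) (h2 : (minpoly ℚ α).natDegree = 2) :
    ∃ p q : ℚ, α^2 + p*α + q = 0 ∧ q ≠ 0 ∧ α ≠ 0 := by
  refine ⟨(minpoly ℚ α).coeff 1, (minpoly ℚ α).coeff 0, ?_, ?_, ?_⟩
  · have h0 := minpoly.aeval ℚ α
    rw [aeval_eq_sum_range' (n := 3) (by omega) α] at h0
    simp only [Finset.sum_range_succ, Finset.sum_range_zero, pow_zero, pow_one, zero_add] at h0
    rw [show (minpoly ℚ α).coeff 2 = 1 by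
      have := (minpoly.monic hint).coeff_natDegree; rwa [h2] at this] at h0
    have : ((minpoly ℚ α).coeff 0 : ℂ) + ((minpoly ℚ α).coeff 1 : ℂ) * α + α^2 = 0 := by
      simpa [Algebra.smul_def] using h0
    linear_combination this
  · exact minpoly.coeff_zero_ne_zero hint (by
      intro h0
      rw [h0, minpoly.zero] at h2
      simp at h2)
  · intro h0
    rw [h0, minpoly.zero] at h2
    simp at h2

lemma minpoly_natDeg_le {z : ℂ} {P : ℚ[X]} (hP : P ≠ 0) (h : aeval z P = 0) :
    (minpoly ℚ z).natDegree ≤ P.natDegree :=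
  natDegree_le_natDegree (minpoly.degree_le_of_ne_zero ℚ z hP h)

lemma ru_order {z : ℂ} (hz : IsRootOfUnity z) :
    0 < orderOf z ∧ z ^ (orderOf z) = 1 ∧
      (minpoly ℚ z).natDegree = (orderOf z).totient := by
  obtain ⟨n, hn, h1⟩ := hz
  have hfin : IsOfFinOrder z := isOfFinOrder_iff_pow_eq_one.2 ⟨n, hn, h1⟩
  have hpos : 0 < orderOf z := hfin.orderOf_pos
  have hpow : z ^ (orderOf z) = 1 := pow_orderOf_eq_one z
  have hprim : IsPrimitiveRoot z (orderOf z) :=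
    ⟨hpow, fun l hl => orderOf_dvd_of_pow_eq_one hl⟩
  have := Polynomial.cyclotomic_eq_minpoly_rat hprim hpos
  refine ⟨hpos, hpow, ?_⟩
  rw [← this, natDegree_cyclotomic]



lemma pow_ne_one_of_not_dvd {z : ℂ} {k : ℕ} (hk : ¬ (orderOf z ∣ k)) : z^k ≠ 1 :=
  fun h => hk (orderOf_dvd_of_pow_eq_one h)

lemma w_cases {w : ℂ} (hw : IsRootOfUnity w) {r : ℚ} (hr : w + (starRingEnd ℂ) w = (r:ℂ)) :
    (r = 2 ∧ w = 1) ∨ (r = -2 ∧ w = -1) ∨ (r = 0 ∧ w^2 = -1) ∨ (r = 1 ∧ w^3 = -1) ∨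
      (r = -1 ∧ w^3 = 1) := by
  have hc := ru_mul_conj hw
  have hne := ru_ne_zero hw
  have hconj : (starRingEnd ℂ) w = (r:ℂ) - w := by linear_combination hr
  have hquad : w^2 - (r:ℂ)*w + 1 = 0 := by linear_combination w*hconj - hc
  have hP : ((X^2 - C r * X + 1 : ℚ[X])).natDegree = 2 := by compute_degree!
  have hPne : (X^2 - C r * X + 1 : ℚ[X]) ≠ 0 := by
    intro h; rw [h] at hP; simp at hP
  have hav : aeval w (X^2 - C r * X + 1 : ℚ[X]) = w^2 - (r:ℂ)*w + 1 := by
    simp [eq_ratCast]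
  have hdeg : (minpoly ℚ w).natDegree ≤ 2 := by
    have h' := minpoly_natDeg_le (z := w) hPne (by rw [hav]; exact hquad)
    rw [hP] at h'
    exact h'
  obtain ⟨hNpos, hNpow, hNdeg⟩ := ru_order hw
  have hφ : (orderOf w).totient ≤ 2 := by omega
  rcases totient_le_four hNpos (by omega) with hN | hN | hN | hN | hN | hN | hN | hN | hN
  · left
    have hw1 : w = 1 := orderOf_eq_one_iff.1 hN
    rw [hw1] at hr
    simp at hr
    exact ⟨by exact_mod_cast hr.symm, hw1⟩
  · right; left
    have hw2 : w^2 = 1 := by rw [← hN]; exact hNpow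
    have hwne1 : w ≠ 1 := by intro h; rw [h, orderOf_one] at hN; omega
    have : (w - 1)*(w + 1) = 0 := by linear_combination hw2
    rcases mul_eq_zero.1 this with h | h
    · exact absurd (by linear_combination h) hwne1
    · have hwm : w = -1 := by linear_combination h
      rw [hwm] at hr
      simp at hr
      refine ⟨?_, hwm⟩
      have : ((-2:ℚ):ℂ) = (r:ℂ) := by push_cast; linear_combination hr
      exact_mod_cast this.symm
  · right; right; right; right
    have hw3 : w^3 = 1 := by rw [← hN]; exact hNpow
    have hwne1 : w ≠ 1 := by intro h; rw [h, orderOf_one] at hN; omega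
    have : (w - 1)*(w^2 + w + 1) = 0 := by linear_combination hw3
    rcases mul_eq_zero.1 this with h | h
    · exact absurd (by linear_combination h) hwne1
    · have hcw : (starRingEnd ℂ) w = w^2 := by
        apply mul_left_cancel₀ hne
        rw [hc]; linear_combination -hw3
      rw [hcw] at hr
      refine ⟨?_, hw3⟩
      have : ((-1:ℚ):ℂ) = (r:ℂ) := by push_cast; linear_combination hr - h
      exact_mod_cast this.symm
  · right; right; left
    have hw4 : w^4 = 1 := by rw [← hN]; exact hNpow
    have hw2ne : w^2 ≠ 1 := pow_ne_one_of_not_dvd (by rw [hN]; decide)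
    have : (w^2 - 1)*(w^2 + 1) = 0 := by linear_combination hw4
    rcases mul_eq_zero.1 this with h | h
    · exact absurd (by linear_combination h) hw2ne
    · have hw2 : w^2 = -1 := by linear_combination h
      have hcw : (starRingEnd ℂ) w = -w := by
        apply mul_left_cancel₀ hne
        rw [hc]; linear_combination hw2
      rw [hcw] at hr
      refine ⟨?_, hw2⟩
      have : ((0:ℚ):ℂ) = (r:ℂ) := by push_cast; linear_combination hr
      exact_mod_cast this.symm
  · -- N = 5 impossible
    exfalso; rw [hN] at hNdeg; rw [show (5:ℕ).totient = 4 by decide] at hNdeg; omega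
  · right; right; right; left
    have hw6 : w^6 = 1 := by rw [← hN]; exact hNpow
    have hw3ne : w^3 ≠ 1 := pow_ne_one_of_not_dvd (by rw [hN]; decide)
    have hsplit : (w^3 - 1)*(w^3 + 1) = 0 := by linear_combination hw6
    rcases mul_eq_zero.1 hsplit with h | h
    · exact absurd (by linear_combination h) hw3ne
    · have hw3 : w^3 = -1 := by linear_combination h
      have hwnem1 : w ≠ -1 := by
        intro hwm; rw [hwm] at hN
        rw [show orderOf (-1 : ℂ) = 2 by
          have : ((-1:ℂ))^2 = 1 := by norm_num
          have h2 := orderOf_eq_prime this (by norm_num)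
          exact h2] at hN
        omega
      have hfac : (w + 1)*(w^2 - w + 1) = 0 := by linear_combination hw3
      rcases mul_eq_zero.1 hfac with h' | h'
      · exact absurd (by linear_combination h') hwnem1
      · have hcw : (starRingEnd ℂ) w = -(w^2) := by
          apply mul_left_cancel₀ hne
          rw [hc]; linear_combination hw3
        rw [hcw] at hr
        refine ⟨?_, hw3⟩
        have : ((1:ℚ):ℂ) = (r:ℂ) := by push_cast; linear_combination hr + h'
        exact_mod_cast this.symm
  · exfalso; rw [hN] at hNdeg; rw [show (8:ℕ).totient = 4 by decide] at hNdeg; omega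
  · exfalso; rw [hN] at hNdeg; rw [show (10:ℕ).totient = 4 by decide] at hNdeg; omega
  · exfalso; rw [hN] at hNdeg; rw [show (12:ℕ).totient = 4 by decide] at hNdeg; omega



lemma real_sq_cases {t c : ℝ} (hc : 0 ≤ c) (h : t^2 = c) :
    t = Real.sqrt c ∨ t = -Real.sqrt c := by
  have h0 : (t - Real.sqrt c) * (t + Real.sqrt c) = 0 := by
    have := Real.sq_sqrt hc
    nlinarith
  rcases mul_eq_zero.1 h0 with h' | h'
  · left; linarith
  · right; linarith

/-- Possible values of `η + conj η` when it satisfies a rational quadratic. -/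
lemma cos_quad {η : ℂ} (hη : IsRootOfUnity η) {A B : ℚ}
    (hq : (η + (starRingEnd ℂ) η)^2 + (A:ℂ)*(η + (starRingEnd ℂ) η) + (B:ℂ) = 0) :
    ∃ xr : ℝ, η + (starRingEnd ℂ) η = (xr:ℂ) ∧
      ((∃ u : ℚ, xr = (u:ℚ)) ∨
       (∃ u v : ℚ, xr = u + v * Real.sqrt 2) ∨
       (∃ u v : ℚ, xr = u + v * Real.sqrt 3) ∨
       (∃ u v : ℚ, xr = u + v * Real.sqrt 5)) := by
  have hc := ru_mul_conj hη
  have hne := ru_ne_zero hη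
  set c := (starRingEnd ℂ) η with hcdef
  have hxr0 : η + c = ((2*η.re:ℝ):ℂ) := by
    rw [hcdef, Complex.add_conj]
  set xr := 2*η.re with hxrdef
  refine ⟨xr, hxr0, ?_⟩
  have hquart : η^4 + (A:ℂ)*η^3 + ((B:ℂ)+2)*η^2 + (A:ℂ)*η + 1 = 0 := by
    linear_combination η^2*hq - (2*η^2 + η*c + 1 + (A:ℂ)*η)*hc
  have hP : ((X^4 + C A*X^3 + C (B+2)*X^2 + C A*X + 1 : ℚ[X])).natDegree = 4 := by
    compute_degree!
  have hPne : (X^4 + C A*X^3 + C (B+2)*X^2 + C A*X + 1 : ℚ[X]) ≠ 0 := by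
    intro h; rw [h] at hP; simp at hP
  have hav : aeval η (X^4 + C A*X^3 + C (B+2)*X^2 + C A*X + 1 : ℚ[X])
      = η^4 + (A:ℂ)*η^3 + ((B:ℂ)+2)*η^2 + (A:ℂ)*η + 1 := by
    simp [eq_ratCast]
  have hdeg : (minpoly ℚ η).natDegree ≤ 4 := by
    have h' := minpoly_natDeg_le (z := η) hPne (by rw [hav]; exact hquart)
    rw [hP] at h'
    exact h'
  obtain ⟨hNpos, hNpow, hNdeg⟩ := ru_order hη
  have hinv : ∀ z : ℂ, η * z = 1 → c = z := by
    intro z hz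
    apply mul_left_cancel₀ hne
    rw [hc, hz]
  rcases totient_le_four hNpos (by omega) with hN | hN | hN | hN | hN | hN | hN | hN | hN
  -- N = 1
  · have hη1 : η = 1 := orderOf_eq_one_iff.1 hN
    left
    refine ⟨2, ?_⟩
    have hcv : c = 1 := hinv 1 (by rw [hη1]; norm_num)
    have : ((xr:ℝ):ℂ) = ((2:ℚ):ℂ) := by rw [← hxr0, hη1, hcv]; norm_num
    exact_mod_cast this
  -- N = 2
  · have hp2 : η^2 = 1 := by rw [← hN]; exact hNpow
    have hne1 : η ≠ 1 := by intro h; rw [h, orderOf_one] at hN; omega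
    have : (η - 1)*(η + 1) = 0 := by linear_combination hp2
    have hm1 : η = -1 := by
      rcases mul_eq_zero.1 this with h | h
      · exact absurd (by linear_combination h) hne1
      · linear_combination h
    left
    refine ⟨-2, ?_⟩
    have hcv : c = -1 := hinv (-1) (by rw [hm1]; norm_num)
    have : ((xr:ℝ):ℂ) = ((-2:ℚ):ℂ) := by rw [← hxr0, hm1, hcv]; norm_num
    exact_mod_cast this
  -- N = 3
  · have hp3 : η^3 = 1 := by rw [← hN]; exact hNpow
    have hne1 : η ≠ 1 := by intro h; rw [h, orderOf_one] at hN; omega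
    have hfac : (η - 1)*(η^2 + η + 1) = 0 := by linear_combination hp3
    have h3 : η^2 + η + 1 = 0 := by
      rcases mul_eq_zero.1 hfac with h | h
      · exact absurd (by linear_combination h) hne1
      · exact h
    have hcv : c = η^2 := hinv _ (by linear_combination hp3)
    left
    refine ⟨-1, ?_⟩
    have : ((xr:ℝ):ℂ) = ((-1:ℚ):ℂ) := by
      rw [← hxr0, hcv]; push_cast; linear_combination h3
    exact_mod_cast this
  -- N = 4
  · have hp4 : η^4 = 1 := by rw [← hN]; exact hNpow
    have h2ne : η^2 ≠ 1 := pow_ne_one_of_not_dvd (by rw [hN]; decide)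
    have hfac : (η^2 - 1)*(η^2 + 1) = 0 := by linear_combination hp4
    have h2 : η^2 = -1 := by
      rcases mul_eq_zero.1 hfac with h | h
      · exact absurd (by linear_combination h) h2ne
      · linear_combination h
    have hcv : c = -η := hinv _ (by linear_combination -h2)
    left
    refine ⟨0, ?_⟩
    have : ((xr:ℝ):ℂ) = ((0:ℚ):ℂ) := by rw [← hxr0, hcv]; push_cast; ring
    exact_mod_cast this
  -- N = 5
  · have hp5 : η^5 = 1 := by rw [← hN]; exact hNpow
    have hne1 : η ≠ 1 := by intro h; rw [h, orderOf_one] at hN; omega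
    have hfac : (η - 1)*(η^4 + η^3 + η^2 + η + 1) = 0 := by linear_combination hp5
    have h5 : η^4 + η^3 + η^2 + η + 1 = 0 := by
      rcases mul_eq_zero.1 hfac with h | h
      · exact absurd (by linear_combination h) hne1
      · exact h
    have hcv : c = η^4 := hinv _ (by linear_combination hp5)
    have hsq : ((2*xr + 1 : ℝ):ℂ)^2 = 5 := by
      push_cast
      rw [show ((xr:ℝ):ℂ) = η + c from hxr0.symm, hcv]
      linear_combination (4:ℂ)*h5 + 4*(η^3 + 2)*hp5
    have hsqr : (2*xr + 1)^2 = (5:ℝ) := by exact_mod_cast hsq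
    right; right; right
    rcases real_sq_cases (by norm_num) hsqr with h | h
    · exact ⟨-1/2, 1/2, by push_cast; linarith⟩
    · exact ⟨-1/2, -1/2, by push_cast; linarith⟩
  -- N = 6
  · have hp6 : η^6 = 1 := by rw [← hN]; exact hNpow
    have h3ne : η^3 ≠ 1 := pow_ne_one_of_not_dvd (by rw [hN]; decide)
    have hfac : (η^3 - 1)*(η^3 + 1) = 0 := by linear_combination hp6
    have h3 : η^3 = -1 := by
      rcases mul_eq_zero.1 hfac with h | h
      · exact absurd (by linear_combination h) h3ne
      · linear_combination h
    have hnem1 : η ≠ -1 := by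
      intro h; rw [h] at hN
      rw [show orderOf (-1 : ℂ) = 2 from orderOf_eq_prime (by norm_num) (by norm_num)] at hN
      omega
    have hfac2 : (η + 1)*(η^2 - η + 1) = 0 := by linear_combination h3
    have h6 : η^2 - η + 1 = 0 := by
      rcases mul_eq_zero.1 hfac2 with h | h
      · exact absurd (by linear_combination h) hnem1
      · exact h
    have hcv : c = -η^2 := hinv _ (by linear_combination -h3)
    left
    refine ⟨1, ?_⟩
    have : ((xr:ℝ):ℂ) = ((1:ℚ):ℂ) := by
      rw [← hxr0, hcv]; push_cast; linear_combination -h6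
    exact_mod_cast this
  -- N = 8
  · have hp8 : η^8 = 1 := by rw [← hN]; exact hNpow
    have h4ne : η^4 ≠ 1 := pow_ne_one_of_not_dvd (by rw [hN]; decide)
    have hfac : (η^4 - 1)*(η^4 + 1) = 0 := by linear_combination hp8
    have h4 : η^4 = -1 := by
      rcases mul_eq_zero.1 hfac with h | h
      · exact absurd (by linear_combination h) h4ne
      · linear_combination h
    have hcv : c = -η^3 := hinv _ (by linear_combination -h4)
    have hsq : ((xr:ℝ):ℂ)^2 = 2 := by
      rw [show ((xr:ℝ):ℂ) = η + c from hxr0.symm, hcv]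
      linear_combination (η^2 - 2)*h4
    have hsqr : xr^2 = (2:ℝ) := by exact_mod_cast hsq
    right; left
    rcases real_sq_cases (by norm_num) hsqr with h | h
    · exact ⟨0, 1, by push_cast; linarith⟩
    · exact ⟨0, -1, by push_cast; linarith⟩
  -- N = 10
  · have hp10 : η^10 = 1 := by rw [← hN]; exact hNpow
    have h5ne : η^5 ≠ 1 := pow_ne_one_of_not_dvd (by rw [hN]; decide)
    have hfac : (η^5 - 1)*(η^5 + 1) = 0 := by linear_combination hp10
    have h5 : η^5 = -1 := by
      rcases mul_eq_zero.1 hfac with h | h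
      · exact absurd (by linear_combination h) h5ne
      · linear_combination h
    have hnem1 : η ≠ -1 := by
      intro h; rw [h] at hN
      rw [show orderOf (-1 : ℂ) = 2 from orderOf_eq_prime (by norm_num) (by norm_num)] at hN
      omega
    have hfac2 : (η + 1)*(η^4 - η^3 + η^2 - η + 1) = 0 := by linear_combination h5
    have h10 : η^4 - η^3 + η^2 - η + 1 = 0 := by
      rcases mul_eq_zero.1 hfac2 with h | h
      · exact absurd (by linear_combination h) hnem1
      · exact h
    have hcv : c = -η^4 := hinv _ (by linear_combination -h5)
    have hsq : ((2*xr - 1 : ℝ):ℂ)^2 = 5 := by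
      push_cast
      rw [show ((xr:ℝ):ℂ) = η + c from hxr0.symm, hcv]
      linear_combination (4:ℂ)*h10 + 4*(η^3 - 2)*h5
    have hsqr : (2*xr - 1)^2 = (5:ℝ) := by exact_mod_cast hsq
    right; right; right
    rcases real_sq_cases (by norm_num) hsqr with h | h
    · exact ⟨1/2, 1/2, by push_cast; linarith⟩
    · exact ⟨1/2, -1/2, by push_cast; linarith⟩
  -- N = 12
  · have hp12 : η^12 = 1 := by rw [← hN]; exact hNpow
    have h6ne : η^6 ≠ 1 := pow_ne_one_of_not_dvd (by rw [hN]; decide)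
    have h4ne : η^4 ≠ 1 := pow_ne_one_of_not_dvd (by rw [hN]; decide)
    have hfac : (η^6 - 1)*(η^6 + 1) = 0 := by linear_combination hp12
    have h6 : η^6 = -1 := by
      rcases mul_eq_zero.1 hfac with h | h
      · exact absurd (by linear_combination h) h6ne
      · linear_combination h
    have hfac2 : (η^2 + 1)*(η^4 - η^2 + 1) = 0 := by linear_combination h6
    have h12 : η^4 - η^2 + 1 = 0 := by
      rcases mul_eq_zero.1 hfac2 with h | h
      · exact absurd (show η^4 = 1 by linear_combination (η^2 - 1)*h) h4ne
      · exact h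
    have hcv : c = -η^5 := hinv _ (by linear_combination -h6)
    have hsq : ((xr:ℝ):ℂ)^2 = 3 := by
      rw [show ((xr:ℝ):ℂ) = η + c from hxr0.symm, hcv]
      linear_combination (η^4 - 2)*h6 - h12
    have hsqr : xr^2 = (3:ℝ) := by exact_mod_cast hsq
    right; right; left
    rcases real_sq_cases (by norm_num) hsqr with h | h
    · exact ⟨0, 1, by push_cast; linarith⟩
    · exact ⟨0, -1, by push_cast; linarith⟩




lemma adjoin_bot {α : ℂ} (u : ℚ) (h : α = (u:ℂ)) : adjoin ℚ {α} = ⊥ := by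
  apply le_antisymm _ bot_le
  rw [adjoin_le_iff]
  intro x hx
  rw [Set.mem_singleton_iff.1 hx, h]
  rw [SetLike.mem_coe, IntermediateField.mem_bot]
  exact ⟨u, eq_ratCast _ u⟩

lemma adjoin_lin {α g : ℂ} (u v : ℚ) (hv : v ≠ 0) (h : α = (u:ℂ) + (v:ℂ)*g) :
    adjoin ℚ {α} = adjoin ℚ {g} := by
  apply le_antisymm
  · rw [adjoin_le_iff]
    intro x hx
    rw [Set.mem_singleton_iff.1 hx, h]
    exact add_mem (SubfieldClass.ratCast_mem _ u)
      (mul_mem (SubfieldClass.ratCast_mem _ v) (mem_adjoin_simple_self ℚ g))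
  · rw [adjoin_le_iff]
    intro x hx
    rw [Set.mem_singleton_iff.1 hx]
    have hα : α ∈ adjoin ℚ {α} := mem_adjoin_simple_self ℚ α
    have hg : g = (α - (u:ℂ)) * ((v:ℂ))⁻¹ := by
      rw [h]
      have : ((v:ℚ):ℂ) ≠ 0 := by exact_mod_cast hv
      field_simp
      ring
    rw [hg]
    exact mul_mem (sub_mem hα (SubfieldClass.ratCast_mem _ u))
      (inv_mem (SubfieldClass.ratCast_mem _ v))

lemma rat_lin_indep {s : ℝ} (hs : ∀ t : ℚ, (t:ℝ) ≠ s) {X Y : ℚ}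
    (h : (X:ℝ) + Y*s = 0) : X = 0 ∧ Y = 0 := by
  by_cases hY : Y = 0
  · subst hY
    simp at h
    exact ⟨by exact_mod_cast h, rfl⟩
  · exfalso
    apply hs (-X/Y)
    have hY' : ((Y:ℚ):ℝ) ≠ 0 := by exact_mod_cast hY
    push_cast
    field_simp
    linarith

lemma sqrt_not_rat {m : ℕ} (hm : ∀ t : ℚ, t^2 ≠ (m:ℚ)) (t : ℚ) : (t:ℝ) ≠ Real.sqrt m := by
  intro h
  apply hm t
  have h2 : ((t:ℝ))^2 = ((m:ℕ):ℝ) := by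
    rw [h]; exact Real.sq_sqrt (by positivity)
  exact_mod_cast h2

lemma indepC {m : ℕ} (hm : ∀ t : ℚ, t^2 ≠ (m:ℚ)) {A B C D : ℚ}
    (h : (A:ℂ) + (B:ℂ)*Complex.I + (C:ℂ)*((Real.sqrt m:ℝ):ℂ)
        + (D:ℂ)*Complex.I*((Real.sqrt m:ℝ):ℂ) = 0) :
    A = 0 ∧ B = 0 ∧ C = 0 ∧ D = 0 := by
  set s : ℝ := Real.sqrt m with hsdef
  have hre : (A:ℝ) + C*s = 0 := by
    have := congrArg Complex.re h
    simpa using this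
  have him : (B:ℝ) + D*s = 0 := by
    have := congrArg Complex.im h
    simpa using this
  obtain ⟨hA, hC⟩ := rat_lin_indep (sqrt_not_rat hm) hre
  obtain ⟨hB, hD⟩ := rat_lin_indep (sqrt_not_rat hm) him
  exact ⟨hA, hB, hC, hD⟩



lemma realIndep {d e : ℕ} (hd : ∀ t : ℚ, t^2 ≠ (d:ℚ)) (he : ∀ t : ℚ, t^2 ≠ (e:ℚ))
    (hde : ∀ t : ℚ, t^2 ≠ ((d*e : ℕ):ℚ)) {A B C D : ℚ}
    (h : (A:ℝ) + B*Real.sqrt d + C*Real.sqrt e + D*Real.sqrt d*Real.sqrt e = 0) :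
    A = 0 ∧ B = 0 ∧ C = 0 ∧ D = 0 := by
  set sd : ℝ := Real.sqrt d with hsddef
  set se : ℝ := Real.sqrt e with hsedef
  have hsd2 : sd^2 = (d:ℝ) := Real.sq_sqrt (by positivity)
  have hse2 : se^2 = (e:ℝ) := Real.sq_sqrt (by positivity)
  have hprod : sd*se = Real.sqrt ((d*e:ℕ):ℝ) := by
    rw [hsddef, hsedef, ← Real.sqrt_mul (by positivity)]
    norm_cast
  by_cases hCD : (C:ℝ) + D*sd = 0
  · obtain ⟨hC, hD⟩ := rat_lin_indep (sqrt_not_rat hd) hCD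
    subst hC; subst hD
    have h' : (A:ℝ) + B*sd = 0 := by push_cast at h ⊢; linarith
    obtain ⟨hA, hB⟩ := rat_lin_indep (sqrt_not_rat hd) h'
    exact ⟨hA, hB, rfl, rfl⟩
  · exfalso
    have hden : C^2 - D^2*(d:ℚ) ≠ 0 := by
      intro h0
      by_cases hD : D = 0
      · apply hCD
        rw [hD] at h0 ⊢
        simp at h0 ⊢
        simpa using h0
      · exact hd (C/D) (by field_simp; linarith [h0])
    set U : ℚ := (B*D*d - A*C)/(C^2 - D^2*d) with hUdef
    set V : ℚ := (A*D - B*C)/(C^2 - D^2*d) with hVdef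
    have hCU : C*U + D*V*(d:ℚ) = -A := by
      rw [hUdef, hVdef]; field_simp; ring
    have hCV : C*V + D*U = -B := by
      rw [hUdef, hVdef]; field_simp; ring
    have hCUR : (C:ℝ)*U + (D:ℝ)*V*(d:ℝ) = -(A:ℝ) := by exact_mod_cast hCU
    have hCVR : (C:ℝ)*V + (D:ℝ)*U = -(B:ℝ) := by exact_mod_cast hCV
    have hse : se = (U:ℝ) + V*sd := by
      have h1 : ((C:ℝ) + D*sd)*se = -A - B*sd := by linear_combination h
      apply mul_left_cancel₀ hCD
      rw [h1]
      linear_combination -hCUR - sd*hCVR - (D:ℝ)*(V:ℝ)*hsd2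
    -- square the relation
    have hsq : ((U^2 + V^2*d - e : ℚ):ℝ) + ((2*U*V : ℚ):ℝ)*sd = 0 := by
      have hsq0 : ((U:ℝ) + V*sd)^2 = (e:ℝ) := by rw [← hse]; exact hse2
      push_cast
      linear_combination hsq0 - (V:ℝ)^2*hsd2
    obtain ⟨h1, h2⟩ := rat_lin_indep (sqrt_not_rat hd) hsq
    have hUV : U = 0 ∨ V = 0 := by
      rcases mul_eq_zero.1 (show U*V = 0 by linarith [h2]) with h | h
      · exact Or.inl h
      · exact Or.inr h
    rcases hUV with hU | hV
    · -- se = V*sd, so sqrt(de) = V*d rational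
      apply sqrt_not_rat hde (V*d)
      rw [← hprod]
      rw [hU] at hse
      push_cast at hse ⊢
      linear_combination -sd*hse - (V:ℝ)*hsd2
    · -- se = U rational
      apply sqrt_not_rat he U
      rw [hV] at hse
      simpa using hse.symm


/-- cross-surd elimination in the real case -/
lemma crossR {d e : ℕ} (hd : ∀ t : ℚ, t^2 ≠ (d:ℚ)) (he : ∀ t : ℚ, t^2 ≠ (e:ℚ))
    (hde : ∀ t : ℚ, t^2 ≠ ((d*e : ℕ):ℚ)) {Q R S p q : ℚ} {x : ℝ}
    (hx : x = (Q:ℝ) + R*Real.sqrt d + S*Real.sqrt e)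
    (hq : x^2 + (p:ℝ)*x + (q:ℝ) = 0) : R = 0 ∨ S = 0 := by
  set sd : ℝ := Real.sqrt d
  set se : ℝ := Real.sqrt e
  have hsd2 : sd^2 = (d:ℝ) := Real.sq_sqrt (by positivity)
  have hse2 : se^2 = (e:ℝ) := Real.sq_sqrt (by positivity)
  have hbasis : ((Q^2 + R^2*d + S^2*e + p*Q + q : ℚ):ℝ) + ((2*Q*R + p*R : ℚ):ℝ)*sd
      + ((2*Q*S + p*S : ℚ):ℝ)*se + ((2*R*S : ℚ):ℝ)*sd*se = 0 := by
    rw [hx] at hq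
    push_cast
    linear_combination hq - (R:ℝ)^2*hsd2 - (S:ℝ)^2*hse2
  obtain ⟨-, -, -, hD⟩ := realIndep hd he hde hbasis
  have : R*S = 0 := by linarith
  rcases mul_eq_zero.1 this with h | h
  · exact Or.inl h
  · exact Or.inr h

/-- vanishing pattern for quadratic α in Q(i, sqrt m) -/
lemma patternC {m : ℕ} (hm : ∀ t : ℚ, t^2 ≠ (m:ℚ)) (hm0 : 0 < m) {P Q R S p q : ℚ} {α : ℂ}
    (hα : α = (P:ℂ) + (Q:ℂ)*Complex.I + (R:ℂ)*((Real.sqrt m:ℝ):ℂ)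
        + (S:ℂ)*Complex.I*((Real.sqrt m:ℝ):ℂ))
    (hq' : α^2 + (p:ℂ)*α + (q:ℂ) = 0) :
    (R = 0 ∧ S = 0) ∨ (Q = 0 ∧ S = 0) ∨ (Q = 0 ∧ R = 0) := by
  set sm : ℂ := ((Real.sqrt m:ℝ):ℂ) with hsmdef
  have hs2 : sm^2 = (m:ℂ) := by
    rw [hsmdef, ← Complex.ofReal_pow, Real.sq_sqrt (by positivity : (0:ℝ) ≤ (m:ℝ))]
    norm_cast
  have hI2 : Complex.I^2 = -1 := Complex.I_sq
  have hbasis : ((P^2 - Q^2 + (R^2 - S^2)*m + p*P + q : ℚ):ℂ)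
      + ((2*P*Q + 2*R*S*m + p*Q : ℚ):ℂ)*Complex.I
      + ((2*P*R - 2*Q*S + p*R : ℚ):ℂ)*sm
      + ((2*P*S + 2*Q*R + p*S : ℚ):ℂ)*Complex.I*sm = 0 := by
    rw [hα] at hq'
    push_cast
    linear_combination hq' - ((R:ℂ) + S*Complex.I)^2*hs2
      - (((Q:ℂ) + S*sm)^2 - (S:ℂ)^2*(sm^2 - (m:ℂ)))*hI2
  obtain ⟨-, hB, hC, hD⟩ := indepC hm hbasis
  -- hB : 2PQ + 2RSm + pQ = 0, hC : 2PR - 2QS + pR = 0, hD : 2PS + 2QR + pS = 0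
  by_cases hQ : Q = 0
  · by_cases hR : R = 0
    · exact Or.inr (Or.inr ⟨hQ, hR⟩)
    · by_cases hS : S = 0
      · exact Or.inr (Or.inl ⟨hQ, hS⟩)
      · exfalso
        have hmne : ((m:ℚ)) ≠ 0 := by
          have : (0:ℚ) < m := by exact_mod_cast hm0
          exact ne_of_gt this
        have h0 : R*S*(m:ℚ) = 0 := by linear_combination hB/2 - (P + p/2)*hQ
        rcases mul_eq_zero.1 h0 with h | h
        · rcases mul_eq_zero.1 h with h' | h'
          · exact hR h'
          · exact hS h'
        · exact hmne h
  · by_cases hR : R = 0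
    · by_cases hS : S = 0
      · exact Or.inl ⟨hR, hS⟩
      · exfalso
        have h0 : Q*S = 0 := by linear_combination -hC/2 + (P + p/2)*hR
        rcases mul_eq_zero.1 h0 with h | h
        · exact hQ h
        · exact hS h
    · exfalso
      -- Q ≠ 0, R ≠ 0: eliminate p from hB, hC: S(R²m+Q²) = 0
      have key : S*((R^2*(m:ℚ) + Q^2)) = 0 := by linear_combination (R/2)*hB - (Q/2)*hC
      have hpos : R^2*(m:ℚ) + Q^2 > 0 := by positivity
      have hS : S = 0 := by
        rcases mul_eq_zero.1 key with h | h
        · exact h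
        · exact absurd h (ne_of_gt hpos)
      have h0 : Q*R = 0 := by linear_combination hD/2 - (P + p/2)*hS
      rcases mul_eq_zero.1 h0 with h | h
      · exact hQ h
      · exact hR h



lemma no510 {p q s n : ℚ} (hn : n ≠ 0) (hsq5 : ∀ t : ℚ, t^2 ≠ (5:ℚ)) {ε : ℚ}
    (hε : ε = 1 ∨ ε = -1) (e3 : p*n*s = ε*n^2) (e2 : q*(s^2 - 2*n) + p^2*n = n^2)
    (e1 : p*q*s = ε*n^2) (e0 : q^2 = n^2) : False := by
  have hε2 : ε^2 = 1 := by rcases hε with h | h <;> rw [h] <;> norm_num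
  have hεne : ε ≠ 0 := by rcases hε with h | h <;> rw [h] <;> norm_num
  have hps : p*s = ε*n := by
    have : n*(p*s - ε*n) = 0 := by linear_combination e3
    rcases mul_eq_zero.1 this with h | h
    · exact absurd h hn
    · linarith
  have hpsne : p*s ≠ 0 := by rw [hps]; exact mul_ne_zero hεne hn
  have hqn : q = n := by
    have h1 : p*s*q = ε*n^2 := by linear_combination e1
    rw [hps] at h1
    have : ε*n*(q - n) = 0 := by linear_combination h1
    rcases mul_eq_zero.1 this with h | h
    · exact absurd h (mul_ne_zero hεne hn)
    · linarith
  have hsum : s^2 + p^2 = 3*n := by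
    rw [hqn] at e2
    have : n*(s^2 + p^2 - 3*n) = 0 := by linear_combination e2
    rcases mul_eq_zero.1 this with h | h
    · exact absurd h hn
    · linarith
  have hsne : s ≠ 0 := fun h => hpsne (by rw [h, mul_zero])
  have hquart : s^4 - 3*n*s^2 + n^2 = 0 := by
    have hp : p = ε*n/s := by field_simp; linarith [hps]
    have : p^2 = n^2/s^2 := by rw [hp]; field_simp; linear_combination hε2
    have h2 : s^2 + n^2/s^2 = 3*n := by rw [← this]; exact hsum
    field_simp at h2
    linear_combination h2
  apply hsq5 ((2*s^2 - 3*n)/n)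
  field_simp
  linear_combination 4*hquart

lemma no8 {a b p q s n r : ℚ} (ha : a ≠ 0) (hn : n ≠ 0) (hq : q ≠ 0)
    (hr : r^2 = 1 ∨ r^2 = 4) (hs : s = a*r + 2*b) (hN : n = a^2 + b^2 + a*b*r)
    (hsq3 : ∀ t : ℚ, t^2 ≠ (3:ℚ)) (hsq6 : ∀ t : ℚ, t^2 ≠ (6:ℚ))
    (e3 : p*n*s = 0) (e2 : q*(s^2 - 2*n) + p^2*n = 0) (e1 : p*q*s = 0)
    (e0 : q^2 = n^2) : False := by
  have hps : p = 0 ∨ s = 0 := by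
    rcases mul_eq_zero.1 e3 with h | h
    · rcases mul_eq_zero.1 h with h' | h'
      · exact Or.inl h'
      · exact absurd h' hn
    · exact Or.inr h
  rcases hps with hp | hs0
  · -- p = 0, so s^2 = 2n
    have hs2 : s^2 = 2*n := by
      rw [hp] at e2
      have : q*(s^2 - 2*n) = 0 := by linear_combination e2
      rcases mul_eq_zero.1 this with h | h
      · exact absurd h hq
      · linarith
    rw [hs, hN] at hs2
    rcases hr with hr1 | hr4
    · have h3 : (a*r+2*b)^2 = 3*a^2 := by linear_combination 2*hs2 - a^2*hr1
      apply hsq3 (s/a)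
      rw [hs]
      field_simp
      linarith [h3]
    · have h4 : (a*r+2*b)^2 = 4*(a^2+b^2+a*b*r) := by linear_combination a^2*hr4
      have : 2*(a^2+b^2+a*b*r) = 0 := by linarith
      apply hn
      rw [hN]
      linarith
  · -- s = 0 : p^2 = 2q
    have hp2 : p^2 = 2*q := by
      rw [hs0] at e2
      have : n*(p^2 - 2*q) = 0 := by linear_combination e2
      rcases mul_eq_zero.1 this with h | h
      · exact absurd h hn
      · linarith
    have har : a*r = -2*b := by rw [hs0] at hs; linarith
    have h2 : (a*r)^2 = 4*b^2 := by rw [har]; ring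
    have hab : a*b*r = -2*b^2 := by linear_combination b*har
    have hqn : q = n ∨ q = -n := by
      have : (q - n)*(q + n) = 0 := by linear_combination e0
      rcases mul_eq_zero.1 this with h | h
      · left; linarith
      · right; linarith
    rcases hr with hr1 | hr4
    · have ha2 : a^2 = 4*b^2 := by linear_combination h2 - a^2*hr1
      have hn3 : n = 3*b^2 := by rw [hN]; linear_combination ha2 + hab
      have hb : b ≠ 0 := by
        intro h0
        apply hn
        rw [hn3, h0]
        ring
      have hb2 : (0:ℚ) < b^2 := by positivity
      rcases hqn with h | h
      · apply hsq6 (p/b)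
        field_simp
        linarith [hp2, h, hn3]
      · linarith [hp2, h, hn3, sq_nonneg p]
    · have ha2 : a^2 = b^2 := by linear_combination (h2 - a^2*hr4)/4
      apply hn
      rw [hN]
      linear_combination ha2 + hab

lemma mu8_span {z : ℂ} (h8 : z^8 = 1) :
    ∃ P Q R S : ℚ, z = (P:ℂ) + (Q:ℂ)*Complex.I + (R:ℂ)*((Real.sqrt 2:ℝ):ℂ)
      + (S:ℂ)*Complex.I*((Real.sqrt 2:ℝ):ℂ) := by
  set s : ℂ := ((Real.sqrt 2:ℝ):ℂ) with hsdef
  have hs2 : s^2 = 2 := by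
    rw [hsdef, ← Complex.ofReal_pow, Real.sq_sqrt (by norm_num : (0:ℝ) ≤ 2)]
    norm_num
  have hI2 : Complex.I^2 = -1 := Complex.I_sq
  have h1 : (z^4 - 1)*(z^4 + 1) = 0 := by linear_combination h8
  rcases mul_eq_zero.1 h1 with h4 | h4
  · have h2 : (z^2 - 1)*(z^2 + 1) = 0 := by linear_combination h4
    rcases mul_eq_zero.1 h2 with h2' | h2'
    · have h3 : (z - 1)*(z + 1) = 0 := by linear_combination h2'
      rcases mul_eq_zero.1 h3 with h | h
      · exact ⟨1, 0, 0, 0, by push_cast; linear_combination h⟩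
      · exact ⟨-1, 0, 0, 0, by push_cast; linear_combination h⟩
    · have h3 : (z - Complex.I)*(z + Complex.I) = 0 := by linear_combination h2' - hI2
      rcases mul_eq_zero.1 h3 with h | h
      · exact ⟨0, 1, 0, 0, by push_cast; linear_combination h⟩
      · exact ⟨0, -1, 0, 0, by push_cast; linear_combination h⟩
  · have h2 : (z^2 - Complex.I)*(z^2 + Complex.I) = 0 := by linear_combination h4 - hI2
    rcases mul_eq_zero.1 h2 with h2' | h2'
    · have h3 : (z - (s/2 + s/2*Complex.I))*(z + (s/2 + s/2*Complex.I)) = 0 := by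
        linear_combination h2' + (-Complex.I/2 - (Complex.I^2+1)/4)*hs2 - (1/2)*hI2
      rcases mul_eq_zero.1 h3 with h | h
      · exact ⟨0, 0, 1/2, 1/2, by push_cast; linear_combination h⟩
      · exact ⟨0, 0, -(1/2), -(1/2), by push_cast; linear_combination h⟩
    · have h3 : (z - (s/2 - s/2*Complex.I))*(z + (s/2 - s/2*Complex.I)) = 0 := by
        linear_combination h2' + (Complex.I/2 - (Complex.I^2+1)/4)*hs2 - (1/2)*hI2
      rcases mul_eq_zero.1 h3 with h | h
      · exact ⟨0, 0, 1/2, -(1/2), by push_cast; linear_combination h⟩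
      · exact ⟨0, 0, -(1/2), 1/2, by push_cast; linear_combination h⟩

lemma mu12_span {z : ℂ} (h12 : z^12 = 1) :
    ∃ P Q R S : ℚ, z = (P:ℂ) + (Q:ℂ)*Complex.I + (R:ℂ)*((Real.sqrt 3:ℝ):ℂ)
      + (S:ℂ)*Complex.I*((Real.sqrt 3:ℝ):ℂ) := by
  set s : ℂ := ((Real.sqrt 3:ℝ):ℂ) with hsdef
  have hs2 : s^2 = 3 := by
    rw [hsdef, ← Complex.ofReal_pow, Real.sq_sqrt (by norm_num : (0:ℝ) ≤ 3)]
    norm_num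
  have hI2 : Complex.I^2 = -1 := Complex.I_sq
  have h1 : (z^6 - 1)*(z^6 + 1) = 0 := by linear_combination h12
  rcases mul_eq_zero.1 h1 with h6 | h6
  · have h2 : (z^3 - 1)*(z^3 + 1) = 0 := by linear_combination h6
    rcases mul_eq_zero.1 h2 with h3' | h3'
    · have hf : (z - 1)*(z^2 + z + 1) = 0 := by linear_combination h3'
      rcases mul_eq_zero.1 hf with h | h
      · exact ⟨1, 0, 0, 0, by push_cast; linear_combination h⟩
      · have hg : (z + 1/2 - Complex.I*s/2)*(z + 1/2 + Complex.I*s/2) = 0 := by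
          linear_combination h + (1/4 - (Complex.I^2+1)/4)*hs2 - (3/4)*hI2
        rcases mul_eq_zero.1 hg with h' | h'
        · exact ⟨-(1/2), 0, 0, 1/2, by push_cast; linear_combination h'⟩
        · exact ⟨-(1/2), 0, 0, -(1/2), by push_cast; linear_combination h'⟩
    · have hf : (z + 1)*(z^2 - z + 1) = 0 := by linear_combination h3'
      rcases mul_eq_zero.1 hf with h | h
      · exact ⟨-1, 0, 0, 0, by push_cast; linear_combination h⟩
      · have hg : (z - 1/2 - Complex.I*s/2)*(z - 1/2 + Complex.I*s/2) = 0 := by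
          linear_combination h + (1/4 - (Complex.I^2+1)/4)*hs2 - (3/4)*hI2
        rcases mul_eq_zero.1 hg with h' | h'
        · exact ⟨1/2, 0, 0, 1/2, by push_cast; linear_combination h'⟩
        · exact ⟨1/2, 0, 0, -(1/2), by push_cast; linear_combination h'⟩
  · have h2 : (z^2 + 1)*(z^4 - z^2 + 1) = 0 := by linear_combination h6
    rcases mul_eq_zero.1 h2 with h2' | h2'
    · have h3 : (z - Complex.I)*(z + Complex.I) = 0 := by linear_combination h2' - hI2
      rcases mul_eq_zero.1 h3 with h | h
      · exact ⟨0, 1, 0, 0, by push_cast; linear_combination h⟩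
      · exact ⟨0, -1, 0, 0, by push_cast; linear_combination h⟩
    · have h3 : (z^2 - 1/2 - Complex.I*s/2)*(z^2 - 1/2 + Complex.I*s/2) = 0 := by
        linear_combination h2' + (1/4 - (Complex.I^2+1)/4)*hs2 - (3/4)*hI2
      rcases mul_eq_zero.1 h3 with h3' | h3'
      · have hg : (z - (s/2 + Complex.I/2))*(z + (s/2 + Complex.I/2)) = 0 := by
          linear_combination h3' - (1/4)*hs2 - (1/4)*hI2
        rcases mul_eq_zero.1 hg with h | h
        · exact ⟨0, 1/2, 1/2, 0, by push_cast; linear_combination h⟩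
        · exact ⟨0, -(1/2), -(1/2), 0, by push_cast; linear_combination h⟩
      · have hg : (z - (s/2 - Complex.I/2))*(z + (s/2 - Complex.I/2)) = 0 := by
          linear_combination h3' - (1/4)*hs2 - (1/4)*hI2
        rcases mul_eq_zero.1 hg with h | h
        · exact ⟨0, -(1/2), 1/2, 0, by push_cast; linear_combination h⟩
        · exact ⟨0, 1/2, -(1/2), 0, by push_cast; linear_combination h⟩



lemma sqrt_cases (d : ℕ) (hd : d = 2 ∨ d = 3 ∨ d = 5) {α : ℂ} {U V : ℚ}
    (h : α = (((U:ℝ) + (V:ℝ)*Real.sqrt d : ℝ) : ℂ)) : Concl α := by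
  by_cases hV : V = 0
  · left
    apply adjoin_bot U
    rw [h, hV]
    push_cast
    ring
  · have hlin := adjoin_lin (α := α) (g := ((Real.sqrt d : ℝ):ℂ)) U V hV
      (by rw [h]; push_cast; ring)
    rcases hd with rfl | rfl | rfl
    · right; right; right; right; left; exact_mod_cast hlin
    · right; right; right; right; right; left; exact_mod_cast hlin
    · right; right; right; right; right; right; exact_mod_cast hlin

lemma real_end {α : ℂ} {p q : ℚ} {xr yr : ℝ} {a b : ℚ}
    (hα : α = ((((a:ℝ)*xr + (b:ℝ)*yr)/2 : ℝ) : ℂ))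
    (hq' : α^2 + (p:ℂ)*α + (q:ℂ) = 0)
    (hx : (∃ u : ℚ, xr = (u:ℝ)) ∨ (∃ u v : ℚ, xr = u + v*Real.sqrt 2) ∨
          (∃ u v : ℚ, xr = u + v*Real.sqrt 3) ∨ (∃ u v : ℚ, xr = u + v*Real.sqrt 5))
    (hy : (∃ u : ℚ, yr = (u:ℝ)) ∨ (∃ u v : ℚ, yr = u + v*Real.sqrt 2) ∨
          (∃ u v : ℚ, yr = u + v*Real.sqrt 3) ∨ (∃ u v : ℚ, yr = u + v*Real.sqrt 5)) :
    Concl α := by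
  have hx' : ∃ (d : ℕ) (u v : ℚ), (d = 1 ∨ d = 2 ∨ d = 3 ∨ d = 5) ∧
      xr = u + v*Real.sqrt d := by
    rcases hx with ⟨u, hu⟩ | ⟨u, v, huv⟩ | ⟨u, v, huv⟩ | ⟨u, v, huv⟩
    · exact ⟨1, u, 0, Or.inl rfl, by rw [hu]; simp⟩
    · exact ⟨2, u, v, Or.inr (Or.inl rfl), by exact_mod_cast huv⟩
    · exact ⟨3, u, v, Or.inr (Or.inr (Or.inl rfl)), by exact_mod_cast huv⟩
    · exact ⟨5, u, v, Or.inr (Or.inr (Or.inr rfl)), by exact_mod_cast huv⟩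
  have hy' : ∃ (d : ℕ) (u v : ℚ), (d = 1 ∨ d = 2 ∨ d = 3 ∨ d = 5) ∧
      yr = u + v*Real.sqrt d := by
    rcases hy with ⟨u, hu⟩ | ⟨u, v, huv⟩ | ⟨u, v, huv⟩ | ⟨u, v, huv⟩
    · exact ⟨1, u, 0, Or.inl rfl, by rw [hu]; simp⟩
    · exact ⟨2, u, v, Or.inr (Or.inl rfl), by exact_mod_cast huv⟩
    · exact ⟨3, u, v, Or.inr (Or.inr (Or.inl rfl)), by exact_mod_cast huv⟩
    · exact ⟨5, u, v, Or.inr (Or.inr (Or.inr rfl)), by exact_mod_cast huv⟩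
  obtain ⟨dx, ux, vx, hdx, hxv⟩ := hx'
  obtain ⟨dy, uy, vy, hdy, hyv⟩ := hy'
  have hαr : α = ((((a*ux + b*uy)/2 : ℚ):ℝ) + (((a*vx/2 : ℚ)):ℝ)*Real.sqrt dx
      + (((b*vy/2 : ℚ)):ℝ)*Real.sqrt dy : ℂ) := by
    rw [hα, hxv, hyv]
    have : ((a:ℝ)*((ux:ℝ) + (vx:ℝ)*Real.sqrt dx) + (b:ℝ)*((uy:ℝ) + (vy:ℝ)*Real.sqrt dy))/2
        = (((a*ux + b*uy)/2 : ℚ):ℝ) + (((a*vx/2 : ℚ)):ℝ)*Real.sqrt dx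
          + (((b*vy/2 : ℚ)):ℝ)*Real.sqrt dy := by
      push_cast
      ring
    rw [this]
    push_cast
    ring
  set U : ℚ := (a*ux + b*uy)/2
  set V : ℚ := a*vx/2
  set W : ℚ := b*vy/2
  -- helper to finish when a single surd remains
  have single : ∀ (d : ℕ), (d = 1 ∨ d = 2 ∨ d = 3 ∨ d = 5) →
      ∀ (A B : ℚ), α = (((A:ℝ) + (B:ℝ)*Real.sqrt d : ℝ) : ℂ) → Concl α := by
    intro d hd A B h
    rcases hd with rfl | hd'
    · left
      apply adjoin_bot (A + B)
      rw [h]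
      have : ((A:ℝ) + (B:ℝ)*Real.sqrt (1:ℕ) : ℝ) = (((A+B:ℚ)):ℝ) := by
        norm_num
      rw [this]
      norm_num
    · exact sqrt_cases d hd' h
  by_cases hsame : dx = dy
  · apply single dy hdy U (V + W)
    rw [hαr, hsame]
    push_cast
    ring
  · rcases hdx with rfl | hdx'
    · apply single dy hdy (U + V) W
      rw [hαr]
      push_cast [Real.sqrt_one]
      ring
    · rcases hdy with rfl | hdy'
      · apply single dx (Or.inr hdx') (U + W) V
        rw [hαr]
        push_cast [Real.sqrt_one]
        ring
      · -- both nontrivial distinct surds: crossR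
        have hqR : (((U:ℝ) + (V:ℝ)*Real.sqrt dx + (W:ℝ)*Real.sqrt dy))^2
            + (p:ℝ)*(((U:ℝ) + (V:ℝ)*Real.sqrt dx + (W:ℝ)*Real.sqrt dy)) + (q:ℝ) = 0 := by
          have h0 := hq'
          rw [hαr] at h0
          exact_mod_cast h0
        have hbundle : (∀ t : ℚ, t^2 ≠ (dx:ℚ)) ∧ (∀ t : ℚ, t^2 ≠ (dy:ℚ)) ∧
            (∀ t : ℚ, t^2 ≠ ((dx*dy : ℕ):ℚ)) := by
          rcases hdx' with rfl | rfl | rfl <;> rcases hdy' with rfl | rfl | rfl <;>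
            first
            | exact absurd rfl hsame
            | exact ⟨no_rat_sq (nsq (by norm_num)), no_rat_sq (nsq (by norm_num)),
                no_rat_sq (nsq (by norm_num))⟩
        obtain ⟨h1, h2, h3⟩ := hbundle
        rcases crossR h1 h2 h3 rfl hqR with hV0 | hW0
        · apply single dy (Or.inr hdy') U W
          rw [hαr, hV0]
          push_cast
          ring
        · apply single dx (Or.inr hdx') U V
          rw [hαr, hW0]
          push_cast
          ring


lemma main_real {a b : ℚ} (ha : a ≠ 0) (hb : b ≠ 0) {η θ α : ℂ}
    (hη : IsRootOfUnity η) (hθ : IsRootOfUnity θ)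
    (hαdef : α = (a:ℂ)*η + (b:ℂ)*θ) {p q : ℚ}
    (hq' : α^2 + (p:ℂ)*α + (q:ℂ) = 0) (hq0 : q ≠ 0) (hα0 : α ≠ 0)
    (hreal : (starRingEnd ℂ) α = α) : Concl α := by
  have hcη := ru_mul_conj hη
  have hcθ := ru_mul_conj hθ
  have haC : (a:ℂ) ≠ 0 := by exact_mod_cast ha
  have hbC : (b:ℂ) ≠ 0 := by exact_mod_cast hb
  have hqC : (q:ℂ) ≠ 0 := by exact_mod_cast hq0
  have R' : (a:ℂ)*η + (b:ℂ)*θ = (a:ℂ)*((starRingEnd ℂ) η) + (b:ℂ)*((starRingEnd ℂ) θ) := by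
    rw [← hαdef]
    nth_rewrite 1 [← hreal]
    rw [hαdef]
    simp [map_add, map_mul]
  set cη := (starRingEnd ℂ) η with hcηdef
  set cθ := (starRingEnd ℂ) θ with hcθdef
  set K : ℚ := a^2 - b^2 with hKdef
  have hαγ : α * ((a:ℂ)*η - (b:ℂ)*cθ) = (K:ℂ) := by
    rw [hαdef, hKdef]
    push_cast
    linear_combination ((a:ℂ)*η)*R' + (a:ℂ)^2*hcη - (b:ℂ)^2*hcθ
  have hmul : α*((q:ℂ)*((a:ℂ)*η - (b:ℂ)*cθ) + (K:ℂ)*α + (K:ℂ)*(p:ℂ)) = 0 := by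
    linear_combination (q:ℂ)*hαγ + (K:ℂ)*hq'
  have hlin : (q:ℂ)*((a:ℂ)*η - (b:ℂ)*cθ) + (K:ℂ)*α + (K:ℂ)*(p:ℂ) = 0 :=
    (mul_eq_zero.1 hmul).resolve_left hα0
  have hax : (a:ℂ)*(η + cη) = α + ((a:ℂ)*η - (b:ℂ)*cθ) := by
    rw [hαdef]
    linear_combination -R'
  have hby : (b:ℂ)*(θ + cθ) = α - ((a:ℂ)*η - (b:ℂ)*cθ) := by
    rw [hαdef]
    ring
  have hkey_x : ((q*a : ℚ):ℂ)*(η + cη) = ((q - K : ℚ):ℂ)*α - ((p*K : ℚ):ℂ) := by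
    push_cast
    linear_combination (q:ℂ)*hax + hlin
  have hkey_y : ((q*b : ℚ):ℂ)*(θ + cθ) = ((q + K : ℚ):ℂ)*α + ((p*K : ℚ):ℂ) := by
    push_cast
    linear_combination (q:ℂ)*hby - hlin
  -- x = u + v α
  set u : ℚ := -(p*K)/(q*a) with hudef
  set v : ℚ := (q-K)/(q*a) with hvdef
  set u' : ℚ := (p*K)/(q*b) with hu'def
  set v' : ℚ := (q+K)/(q*b) with hv'def
  have hqaC : ((q*a:ℚ):ℂ) ≠ 0 := by
    push_cast
    exact mul_ne_zero hqC haC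
  have hqbC : ((q*b:ℚ):ℂ) ≠ 0 := by
    push_cast
    exact mul_ne_zero hqC hbC
  have hx2 : η + cη = (u:ℂ) + (v:ℂ)*α := by
    apply mul_left_cancel₀ hqaC
    rw [hkey_x, hudef, hvdef]
    push_cast
    field_simp
    ring
  have hy2 : θ + cθ = (u':ℂ) + (v':ℂ)*α := by
    apply mul_left_cancel₀ hqbC
    rw [hkey_y, hu'def, hv'def]
    push_cast
    field_simp
    ring
  have hquadx : (η + cη)^2 + ((p*v - 2*u : ℚ):ℂ)*(η + cη) + ((u^2 - p*v*u + q*v^2 : ℚ):ℂ) = 0 := by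
    rw [hx2]
    push_cast
    linear_combination (v:ℂ)^2*hq'
  have hquady : (θ + cθ)^2 + ((p*v' - 2*u' : ℚ):ℂ)*(θ + cθ)
      + ((u'^2 - p*v'*u' + q*v'^2 : ℚ):ℂ) = 0 := by
    rw [hy2]
    push_cast
    linear_combination (v':ℂ)^2*hq'
  obtain ⟨xr, hxreq, hxforms⟩ := cos_quad hη hquadx
  obtain ⟨yr, hyreq, hyforms⟩ := cos_quad hθ hquady
  rw [← hcηdef] at hxreq
  rw [← hcθdef] at hyreq
  have h2α : 2*α = (a:ℂ)*((xr:ℝ):ℂ) + (b:ℂ)*((yr:ℝ):ℂ) := by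
    rw [← hxreq, ← hyreq]
    linear_combination -hax - hby
  have hαxy : α = ((((a:ℝ)*xr + (b:ℝ)*yr)/2 : ℝ):ℂ) := by
    push_cast
    linear_combination h2α/2
  exact real_end hαxy hq' hxforms hyforms


/-- endgame: both roots of unity in μ_12 (resp μ_8), α quadratic. -/
lemma endgame {m : ℕ} (hm : m = 2 ∨ m = 3) {a b p q : ℚ} {η θ α : ℂ}
    (hαdef : α = (a:ℂ)*η + (b:ℂ)*θ)
    (hq' : α^2 + (p:ℂ)*α + (q:ℂ) = 0)
    (hη : ∃ P Q R S : ℚ, η = (P:ℂ) + (Q:ℂ)*Complex.I + (R:ℂ)*((Real.sqrt m:ℝ):ℂ)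
      + (S:ℂ)*Complex.I*((Real.sqrt m:ℝ):ℂ))
    (hθ : ∃ P Q R S : ℚ, θ = (P:ℂ) + (Q:ℂ)*Complex.I + (R:ℂ)*((Real.sqrt m:ℝ):ℂ)
      + (S:ℂ)*Complex.I*((Real.sqrt m:ℝ):ℂ)) : Concl α := by
  obtain ⟨P1, Q1, R1, S1, hη1⟩ := hη
  obtain ⟨P2, Q2, R2, S2, hθ1⟩ := hθ
  have hαco : α = ((a*P1 + b*P2 : ℚ):ℂ) + ((a*Q1 + b*Q2 : ℚ):ℂ)*Complex.I
      + ((a*R1 + b*R2 : ℚ):ℂ)*((Real.sqrt m:ℝ):ℂ)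
      + ((a*S1 + b*S2 : ℚ):ℂ)*Complex.I*((Real.sqrt m:ℝ):ℂ) := by
    rw [hαdef, hη1, hθ1]
    push_cast
    ring
  have hmsq : ∀ t : ℚ, t^2 ≠ (m:ℚ) := by
    rcases hm with rfl | rfl
    · exact no_rat_sq (nsq (by norm_num))
    · exact no_rat_sq (nsq (by norm_num))
  have hm0 : 0 < m := by rcases hm with rfl | rfl <;> norm_num
  rcases patternC hmsq hm0 hαco hq' with ⟨hR, hS⟩ | ⟨hQ, hS⟩ | ⟨hQ, hR⟩
  · -- α = P + Q i
    by_cases hQ : a*Q1 + b*Q2 = 0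
    · left
      apply adjoin_bot (a*P1 + b*P2)
      rw [hαco, hR, hS, hQ]
      push_cast
      ring
    · right; left
      apply adjoin_lin (a*P1 + b*P2) (a*Q1 + b*Q2) hQ
      rw [hαco, hR, hS]
      push_cast
      ring
  · -- α = P + R sqrt m
    by_cases hR : a*R1 + b*R2 = 0
    · left
      apply adjoin_bot (a*P1 + b*P2)
      rw [hαco, hQ, hS, hR]
      push_cast
      ring
    · have hlin := adjoin_lin (α := α) (g := ((Real.sqrt m:ℝ):ℂ)) (a*P1 + b*P2) (a*R1 + b*R2) hR
        (by rw [hαco, hQ, hS]; push_cast; ring)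
      rcases hm with rfl | rfl
      · right; right; right; right; left; exact_mod_cast hlin
      · right; right; right; right; right; left; exact_mod_cast hlin
  · -- α = P + S i sqrt m
    by_cases hS : a*S1 + b*S2 = 0
    · left
      apply adjoin_bot (a*P1 + b*P2)
      rw [hαco, hQ, hR, hS]
      push_cast
      ring
    · have hlin := adjoin_lin (α := α) (g := Complex.I*((Real.sqrt m:ℝ):ℂ))
        (a*P1 + b*P2) (a*S1 + b*S2) hS
        (by rw [hαco, hQ, hR]; push_cast; ring)
      rcases hm with rfl | rfl
      · right; right; left; exact_mod_cast hlin
      · right; right; right; left; exact_mod_cast hlin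

lemma cubic_coeffs {c3 c2 c1 c0 : ℚ}
    (h : C c3*X^3 + C c2*X^2 + C c1*X + C c0 = (0:ℚ[X])) :
    c3 = 0 ∧ c2 = 0 ∧ c1 = 0 ∧ c0 = 0 := by
  refine ⟨?_, ?_, ?_, ?_⟩
  · have := congrArg (fun P : ℚ[X] => P.coeff 3) h
    simpa [coeff_add, coeff_C_mul, coeff_X_pow, coeff_C, coeff_X] using this
  · have := congrArg (fun P : ℚ[X] => P.coeff 2) h
    simpa [coeff_add, coeff_C_mul, coeff_X_pow, coeff_C, coeff_X] using this
  · have := congrArg (fun P : ℚ[X] => P.coeff 1) h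
    simpa [coeff_add, coeff_C_mul, coeff_X_pow, coeff_C, coeff_X] using this
  · have := congrArg (fun P : ℚ[X] => P.coeff 0) h
    simpa [coeff_add, coeff_C_mul, coeff_X_pow, coeff_C, coeff_X] using this

lemma main_nonreal {a b : ℚ} (ha : a ≠ 0) (hb : b ≠ 0) {η θ α : ℂ}
    (hη : IsRootOfUnity η) (hθ : IsRootOfUnity θ)
    (hαdef : α = (a:ℂ)*η + (b:ℂ)*θ) {p q : ℚ}
    (hq' : α^2 + (p:ℂ)*α + (q:ℂ) = 0) (hq0 : q ≠ 0) (hα0 : α ≠ 0)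
    (hne : (starRingEnd ℂ) α ≠ α) : Concl α := by
  have hcη := ru_mul_conj hη
  have hcθ := ru_mul_conj hθ
  have haC : (a:ℂ) ≠ 0 := by exact_mod_cast ha
  have hbC : (b:ℂ) ≠ 0 := by exact_mod_cast hb
  have hqC : (q:ℂ) ≠ 0 := by exact_mod_cast hq0
  -- conjugate equation and norm
  have hq'c : ((starRingEnd ℂ) α)^2 + (p:ℂ)*((starRingEnd ℂ) α) + (q:ℂ) = 0 := by
    have h0 := congrArg (starRingEnd ℂ) hq'
    simpa using h0
  have hsub : α + (starRingEnd ℂ) α = -(p:ℂ) := by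
    have hfac : (α - (starRingEnd ℂ) α)*(α + (starRingEnd ℂ) α + (p:ℂ)) = 0 := by
      linear_combination hq' - hq'c
    have hne0 : α - (starRingEnd ℂ) α ≠ 0 := sub_ne_zero.2 (Ne.symm hne)
    have := (mul_eq_zero.1 hfac).resolve_left hne0
    linear_combination this
  have hnorm : α * ((starRingEnd ℂ) α) = (q:ℂ) := by
    linear_combination α*hsub - hq'
  -- w and r
  have hwru : IsRootOfUnity (η * (starRingEnd ℂ) θ) := ru_mul hη (ru_conj hθ)
  set w : ℂ := η * (starRingEnd ℂ) θ with hwdef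
  have hwc : w * (starRingEnd ℂ) w = 1 := ru_mul_conj hwru
  have hconjw : (starRingEnd ℂ) w = ((starRingEnd ℂ) η) * θ := by
    rw [hwdef]
    simp
  set r : ℚ := (q - a^2 - b^2)/(a*b) with hrdef
  have hr_eq : r*(a*b) = q - a^2 - b^2 := by
    rw [hrdef]
    field_simp
  have hnorm' : ((a:ℂ)*η + (b:ℂ)*θ)*((a:ℂ)*((starRingEnd ℂ) η) + (b:ℂ)*((starRingEnd ℂ) θ)) = (q:ℂ) := by
    rw [← hαdef]
    have hconjα : (starRingEnd ℂ) α = (a:ℂ)*((starRingEnd ℂ) η) + (b:ℂ)*((starRingEnd ℂ) θ) := by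
      rw [hαdef]; simp
    rw [← hconjα]
    exact hnorm
  have hexp : (a:ℂ)^2 + (b:ℂ)^2 + (a:ℂ)*(b:ℂ)*(w + (starRingEnd ℂ) w) = (q:ℂ) := by
    rw [hwdef, hconjw]
    linear_combination hnorm' - (a:ℂ)^2*hcη - (b:ℂ)^2*hcθ
  have hwr : w + (starRingEnd ℂ) w = (r:ℂ) := by
    apply mul_left_cancel₀ (mul_ne_zero haC hbC)
    have hr_eqC : (r:ℂ)*((a:ℂ)*(b:ℂ)) = (q:ℂ) - (a:ℂ)^2 - (b:ℂ)^2 := by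
      exact_mod_cast congrArg (fun t : ℚ => (t:ℂ)) hr_eq
    linear_combination hexp - hr_eqC
  have hconjw_lin : (starRingEnd ℂ) w = (r:ℂ) - w := by linear_combination hwr
  have hw0 : w ≠ 0 := ru_ne_zero hwru
  have hquadw : w^2 - (r:ℂ)*w + 1 = 0 := by linear_combination w*hconjw_lin - hwc
  -- summary facts about w
  have hwsum : w^12 = 1 ∧ ((r = 0 ∧ w^4 = 1) ∨ (r^2 = 1 ∨ r^2 = 4)) := by
    rcases w_cases hwru hwr with ⟨hr2, hw1⟩ | ⟨hr2, hw1⟩ | ⟨hr2, hw2⟩ | ⟨hr2, hw3⟩ | ⟨hr2, hw3⟩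
    · exact ⟨by rw [hw1]; norm_num, Or.inr (Or.inr (by rw [hr2]; norm_num))⟩
    · exact ⟨by rw [hw1]; norm_num, Or.inr (Or.inr (by rw [hr2]; norm_num))⟩
    · refine ⟨?_, Or.inl ⟨hr2, ?_⟩⟩
      · rw [show (12:ℕ) = 2*6 from rfl, pow_mul, hw2]; norm_num
      · rw [show (4:ℕ) = 2*2 from rfl, pow_mul, hw2]; norm_num
    · exact ⟨by rw [show (12:ℕ) = 3*4 from rfl, pow_mul, hw3]; norm_num,
        Or.inr (Or.inl (by rw [hr2]; norm_num))⟩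
    · exact ⟨by rw [show (12:ℕ) = 3*4 from rfl, pow_mul, hw3]; norm_num,
        Or.inr (Or.inl (by rw [hr2]; norm_num))⟩
  obtain ⟨hw12, hwdisj⟩ := hwsum
  have hwθ : w*θ = η := by
    rw [hwdef]
    linear_combination η*hcθ
  -- c = a w + b
  have hαcθ : α = ((a:ℂ)*w + (b:ℂ))*θ := by
    rw [hαdef, hwdef]
    linear_combination -(a:ℂ)*η*hcθ
  have hcne : (a:ℂ)*w + (b:ℂ) ≠ 0 := by
    intro h0
    apply hα0
    rw [hαcθ, h0, zero_mul]
  set s : ℚ := a*r + 2*b with hsdef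
  set n : ℚ := a^2 + b^2 + a*b*r with hndef
  have hconjc : (starRingEnd ℂ) ((a:ℂ)*w + (b:ℂ)) = (s:ℂ) - ((a:ℂ)*w + (b:ℂ)) := by
    rw [map_add, map_mul, hconjw_lin, hsdef]
    push_cast
    simp
    ring
  have hcc : ((a:ℂ)*w + (b:ℂ))*((s:ℂ) - ((a:ℂ)*w + (b:ℂ))) = (n:ℂ) := by
    rw [hsdef, hndef]
    push_cast
    linear_combination -(a:ℂ)^2*hquadw
  have hn0 : n ≠ 0 := by
    intro h0
    rw [h0] at hcc
    push_cast at hcc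
    rcases mul_eq_zero.1 hcc with h1 | h1
    · exact hcne h1
    · have h2 : (starRingEnd ℂ) ((a:ℂ)*w + (b:ℂ)) = 0 := by rw [hconjc]; linear_combination h1
      apply hcne
      have := congrArg (starRingEnd ℂ) h2
      simpa using this
  have hq'' : ((a:ℂ)*w + (b:ℂ))^2*θ^2 + (p:ℂ)*((a:ℂ)*w + (b:ℂ))*θ + (q:ℂ) = 0 := by
    rw [hαcθ] at hq'
    linear_combination hq'
  -- rational quartic satisfied by θ
  have hT : ((n^2:ℚ):ℂ)*θ^4 + ((p*n*s:ℚ):ℂ)*θ^3 + ((q*(s^2-2*n)+p^2*n : ℚ):ℂ)*θ^2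
      + ((p*q*s:ℚ):ℂ)*θ + ((q^2:ℚ):ℂ) = 0 := by
    push_cast
    linear_combination (((s:ℂ) - ((a:ℂ)*w + (b:ℂ)))^2*θ^2
        + (p:ℂ)*((s:ℂ) - ((a:ℂ)*w + (b:ℂ)))*θ + (q:ℂ))*hq''
      - (θ^4*((n:ℂ) + ((a:ℂ)*w + (b:ℂ))*((s:ℂ) - ((a:ℂ)*w + (b:ℂ))))
        + (p:ℂ)*(s:ℂ)*θ^3 + ((p:ℂ)^2 - 2*(q:ℂ))*θ^2)*hcc
  have hPT : ((C (n^2)*X^4 + C (p*n*s)*X^3 + C (q*(s^2-2*n)+p^2*n)*X^2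
      + C (p*q*s)*X + C (q^2) : ℚ[X])).natDegree ≤ 4 := by
    compute_degree
  have hPTa : aeval θ (C (n^2)*X^4 + C (p*n*s)*X^3 + C (q*(s^2-2*n)+p^2*n)*X^2
      + C (p*q*s)*X + C (q^2) : ℚ[X]) = 0 := by
    simp only [map_add, map_mul, map_pow, aeval_X, aeval_C, eq_ratCast]
    push_cast
    push_cast at hT
    linear_combination hT
  have hPTne : (C (n^2)*X^4 + C (p*n*s)*X^3 + C (q*(s^2-2*n)+p^2*n)*X^2
      + C (p*q*s)*X + C (q^2) : ℚ[X]) ≠ 0 := by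
    intro h0
    have := congrArg (fun P : ℚ[X] => P.coeff 0) h0
    simp only [coeff_zero_eq_eval_zero] at this
    simp at this
    exact hq0 this
  have hdegθ : (minpoly ℚ θ).natDegree ≤ 4 :=
    le_trans (minpoly_natDeg_le hPTne hPTa) hPT
  obtain ⟨hNpos, hNpow, hNdeg⟩ := ru_order hθ
  -- endgames
  have end12 : θ^12 = 1 → Concl α := by
    intro hθ12
    have hη12 : η^12 = 1 := by
      rw [← hwθ, mul_pow, hw12, hθ12, one_mul]
    exact endgame (Or.inr rfl) hαdef hq' (mu12_span hη12) (mu12_span hθ12)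
  have end8 : θ^8 = 1 → w^4 = 1 → Concl α := by
    intro hθ8 hw4
    have hη8 : η^8 = 1 := by
      rw [← hwθ, mul_pow, show (8:ℕ) = 4*2 from rfl, pow_mul, hw4, hθ8]
      norm_num
    exact endgame (Or.inl rfl) hαdef hq' (mu8_span hη8) (mu8_span hθ8)
  have hsq5 : ∀ t : ℚ, t^2 ≠ (5:ℚ) := by
    have := no_rat_sq (m := 5) (nsq (by norm_num))
    intro t; have h := this t; exact_mod_cast h
  have hsq3 : ∀ t : ℚ, t^2 ≠ (3:ℚ) := by
    have := no_rat_sq (m := 3) (nsq (by norm_num))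
    intro t; have h := this t; exact_mod_cast h
  have hsq6 : ∀ t : ℚ, t^2 ≠ (6:ℚ) := by
    have := no_rat_sq (m := 6) (nsq (by norm_num))
    intro t; have h := this t; exact_mod_cast h
  have hdvd12 : ∀ k : ℕ, orderOf θ = k → k ∣ 12 → Concl α := by
    intro k hk hdvd
    apply end12
    exact orderOf_dvd_iff_pow_eq_one.1 (by rw [hk]; exact hdvd)
  rcases totient_le_four hNpos (by omega) with hN | hN | hN | hN | hN | hN | hN | hN | hN
  · exact hdvd12 1 hN (by norm_num)
  · exact hdvd12 2 hN (by norm_num)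
  · exact hdvd12 3 hN (by norm_num)
  · exact hdvd12 4 hN (by norm_num)
  · -- N = 5 : contradiction
    exfalso
    have hp5 : θ^5 = 1 := by rw [← hN]; exact hNpow
    have hne1 : θ ≠ 1 := by intro h; rw [h, orderOf_one] at hN; omega
    have hΦ5 : θ^4 + θ^3 + θ^2 + θ + 1 = 0 := by
      have hfac : (θ - 1)*(θ^4 + θ^3 + θ^2 + θ + 1) = 0 := by linear_combination hp5
      rcases mul_eq_zero.1 hfac with h | h
      · exact absurd (by linear_combination h) hne1
      · exact h
    have hdeg4 : (minpoly ℚ θ).natDegree = 4 := by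
      rw [hNdeg, hN]; decide
    have hDa : aeval θ (C (p*n*s - n^2)*X^3 + C (q*(s^2-2*n)+p^2*n - n^2)*X^2
        + C (p*q*s - n^2)*X + C (q^2 - n^2) : ℚ[X]) = 0 := by
      simp only [map_add, map_mul, map_pow, aeval_X, aeval_C, eq_ratCast]
      push_cast
      push_cast at hT
      linear_combination hT - (n:ℂ)^2*hΦ5
    have hD0 : (C (p*n*s - n^2)*X^3 + C (q*(s^2-2*n)+p^2*n - n^2)*X^2
        + C (p*q*s - n^2)*X + C (q^2 - n^2) : ℚ[X]) = 0 := by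
      by_contra hD0
      have hle := minpoly_natDeg_le hD0 hDa
      have hdegD : ((C (p*n*s - n^2)*X^3 + C (q*(s^2-2*n)+p^2*n - n^2)*X^2
        + C (p*q*s - n^2)*X + C (q^2 - n^2) : ℚ[X])).natDegree ≤ 3 := by compute_degree
      omega
    obtain ⟨e3, e2, e1, e0⟩ := cubic_coeffs hD0
    exact no510 (p := p) (q := q) (s := s) (n := n) hn0 hsq5 (Or.inl rfl) (by linarith) (by linarith) (by linarith) (by linarith)
  · exact hdvd12 6 hN (by norm_num)
  · -- N = 8
    have hp8 : θ^8 = 1 := by rw [← hN]; exact hNpow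
    have h4ne : θ^4 ≠ 1 := pow_ne_one_of_not_dvd (by rw [hN]; decide)
    have h4 : θ^4 = -1 := by
      have hfac : (θ^4 - 1)*(θ^4 + 1) = 0 := by linear_combination hp8
      rcases mul_eq_zero.1 hfac with h | h
      · exact absurd (by linear_combination h) h4ne
      · linear_combination h
    rcases hwdisj with ⟨hr0, hw4⟩ | hrsq
    · exact end8 hp8 hw4
    · exfalso
      have hdeg4 : (minpoly ℚ θ).natDegree = 4 := by
        rw [hNdeg, hN]; decide
      have hDa : aeval θ (C (p*n*s)*X^3 + C (q*(s^2-2*n)+p^2*n)*X^2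
          + C (p*q*s)*X + C (q^2 - n^2) : ℚ[X]) = 0 := by
        simp only [map_add, map_mul, map_pow, aeval_X, aeval_C, eq_ratCast]
        push_cast
        push_cast at hT
        linear_combination hT - (n:ℂ)^2*(by linear_combination h4 : θ^4 + 1 = 0)
      have hD0 : (C (p*n*s)*X^3 + C (q*(s^2-2*n)+p^2*n)*X^2
          + C (p*q*s)*X + C (q^2 - n^2) : ℚ[X]) = 0 := by
        by_contra hD0
        have hle := minpoly_natDeg_le hD0 hDa
        have hdegD : ((C (p*n*s)*X^3 + C (q*(s^2-2*n)+p^2*n)*X^2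
          + C (p*q*s)*X + C (q^2 - n^2) : ℚ[X])).natDegree ≤ 3 := by compute_degree
        omega
      obtain ⟨e3, e2, e1, e0⟩ := cubic_coeffs hD0
      exact no8 (p := p) (b := b) ha hn0 hq0 hrsq hsdef hndef hsq3 hsq6 e3 e2 e1 (by linarith)
  · -- N = 10 : contradiction
    exfalso
    have hp10 : θ^10 = 1 := by rw [← hN]; exact hNpow
    have h5ne : θ^5 ≠ 1 := pow_ne_one_of_not_dvd (by rw [hN]; decide)
    have h5 : θ^5 = -1 := by
      have hfac : (θ^5 - 1)*(θ^5 + 1) = 0 := by linear_combination hp10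
      rcases mul_eq_zero.1 hfac with h | h
      · exact absurd (by linear_combination h) h5ne
      · linear_combination h
    have hnem1 : θ ≠ -1 := by
      intro h; rw [h] at hN
      rw [show orderOf (-1 : ℂ) = 2 from orderOf_eq_prime (by norm_num) (by norm_num)] at hN
      omega
    have hΦ10 : θ^4 - θ^3 + θ^2 - θ + 1 = 0 := by
      have hfac : (θ + 1)*(θ^4 - θ^3 + θ^2 - θ + 1) = 0 := by linear_combination h5
      rcases mul_eq_zero.1 hfac with h | h
      · exact absurd (by linear_combination h) hnem1
      · exact h
    have hdeg4 : (minpoly ℚ θ).natDegree = 4 := by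
      rw [hNdeg, hN]; decide
    have hDa : aeval θ (C (p*n*s + n^2)*X^3 + C (q*(s^2-2*n)+p^2*n - n^2)*X^2
        + C (p*q*s + n^2)*X + C (q^2 - n^2) : ℚ[X]) = 0 := by
      simp only [map_add, map_mul, map_pow, aeval_X, aeval_C, eq_ratCast]
      push_cast
      push_cast at hT
      linear_combination hT - (n:ℂ)^2*hΦ10
    have hD0 : (C (p*n*s + n^2)*X^3 + C (q*(s^2-2*n)+p^2*n - n^2)*X^2
        + C (p*q*s + n^2)*X + C (q^2 - n^2) : ℚ[X]) = 0 := by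
      by_contra hD0
      have hle := minpoly_natDeg_le hD0 hDa
      have hdegD : ((C (p*n*s + n^2)*X^3 + C (q*(s^2-2*n)+p^2*n - n^2)*X^2
        + C (p*q*s + n^2)*X + C (q^2 - n^2) : ℚ[X])).natDegree ≤ 3 := by compute_degree
      omega
    obtain ⟨e3, e2, e1, e0⟩ := cubic_coeffs hD0
    exact no510 (p := p) (q := q) (s := s) (n := n) hn0 hsq5 (Or.inr rfl) (by linarith) (by linarith) (by linarith) (by linarith)
  · exact hdvd12 12 hN (by norm_num)


end FQC

/-- If `a, b` are non-zero rationals and `η, θ` roots of unity such that `α = aη + bθ` has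
degree 1 or 2 over `ℚ`, then `ℚ(α)` is one of
`ℚ, ℚ(i), ℚ(√-2), ℚ(√-3), ℚ(√2), ℚ(√3), ℚ(√5)`. -/
theorem field_of_quadratic_combination (a b : ℚ) (ha : a ≠ 0) (hb : b ≠ 0)
    (η θ : ℂ) (hη : IsRootOfUnity η) (hθ : IsRootOfUnity θ)
    (hdeg : (minpoly ℚ ((a : ℂ) * η + (b : ℂ) * θ)).natDegree = 1 ∨
      (minpoly ℚ ((a : ℂ) * η + (b : ℂ) * θ)).natDegree = 2) :
    IntermediateField.adjoin ℚ {(a : ℂ) * η + (b : ℂ) * θ} = ⊥ ∨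
    IntermediateField.adjoin ℚ {(a : ℂ) * η + (b : ℂ) * θ} =
      IntermediateField.adjoin ℚ {Complex.I} ∨
    IntermediateField.adjoin ℚ {(a : ℂ) * η + (b : ℂ) * θ} =
      IntermediateField.adjoin ℚ {Complex.I * ((Real.sqrt 2 : ℝ) : ℂ)} ∨
    IntermediateField.adjoin ℚ {(a : ℂ) * η + (b : ℂ) * θ} =
      IntermediateField.adjoin ℚ {Complex.I * ((Real.sqrt 3 : ℝ) : ℂ)} ∨
    IntermediateField.adjoin ℚ {(a : ℂ) * η + (b : ℂ) * θ} =
      IntermediateField.adjoin ℚ {((Real.sqrt 2 : ℝ) : ℂ)} ∨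
    IntermediateField.adjoin ℚ {(a : ℂ) * η + (b : ℂ) * θ} =
      IntermediateField.adjoin ℚ {((Real.sqrt 3 : ℝ) : ℂ)} ∨
    IntermediateField.adjoin ℚ {(a : ℂ) * η + (b : ℂ) * θ} =
      IntermediateField.adjoin ℚ {((Real.sqrt 5 : ℝ) : ℂ)} := by
  have hia : IsIntegral ℚ ((a:ℂ)) := by
    rw [← eq_ratCast (algebraMap ℚ ℂ) a]
    exact isIntegral_algebraMap
  have hib : IsIntegral ℚ ((b:ℂ)) := by
    rw [← eq_ratCast (algebraMap ℚ ℂ) b]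
    exact isIntegral_algebraMap
  have hαint : IsIntegral ℚ ((a:ℂ)*η + (b:ℂ)*θ) :=
    (hia.mul (FQC.ru_isIntegral hη)).add (hib.mul (FQC.ru_isIntegral hθ))
  rcases hdeg with h1 | h2
  · obtain ⟨u, hu⟩ := FQC.lin_eq hαint h1
    exact Or.inl (FQC.adjoin_bot u hu)
  · obtain ⟨p, q, hq', hq0, hα0⟩ := FQC.quad_eq hαint h2
    by_cases hreal : (starRingEnd ℂ) ((a:ℂ)*η + (b:ℂ)*θ) = (a:ℂ)*η + (b:ℂ)*θ
    · exact FQC.main_real ha hb hη hθ rfl hq' hq0 hα0 hreal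
    · exact FQC.main_nonreal ha hb hη hθ rfl hq' hq0 hα0 hreal
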